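/- Let ξ be the random variable with independent Q̃-symbols. If P̃ has infinitely many columns with a zero entry and ∑_{k=1}^∞ ∑_{i: p_{ik}=0} q_{ik} < ∞, then the topological support of μ_ξ is nowhere dense, yet μ_ξ is supported by a set P such that for every x ∈ P and every ε > 0 the set P ∩ (x−ε, x+ε) has positive Lebesgue measure (μ_ξ is of pure P-type). -/

import Mathlib

open MeasureTheory Filter Finset Topology

/-- The coding map of the `Q̃`-representation: it sends a digit sequence
`ω`, with `k`-th digit in `{0, 1, ..., N k}`, to the point of `[0,1]` given by
formula (5) of the paper: `x = ∑_k D_k(x) L_{k-1}(x)`, i.e. the unique point in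
the intersection of the nested cylinder intervals `Δ_{ω₁...ω_k}`. -/
noncomputable def codingMap (N : ℕ → ℕ) (q : (k : ℕ) → Fin (N k + 1) → ℝ)
    (ω : (k : ℕ) → Fin (N k + 1)) : ℝ :=
  ∑' k : ℕ, (∑ j : Fin (N k + 1), if (j : ℕ) < (ω k : ℕ) then q k j else 0) *
    ∏ s ∈ Finset.range k, q s (ω s)

/-- `Γ_{Q̃(V)}`: the set of points of `[0,1]` admitting a `Q̃`-representation
whose `k`-th digit lies in `V k` for every `k`. -/
noncomputable def QtSet (N : ℕ → ℕ) (q : (k : ℕ) → Fin (N k + 1) → ℝ)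
    (V : (k : ℕ) → Finset (Fin (N k + 1))) : Set ℝ :=
  codingMap N q '' {ω | ∀ k, ω k ∈ V k}

/-- The topological support of a measure on `ℝ`: the set of points all of whose
neighbourhoods have positive measure.  It is the smallest closed set of full
measure. -/
def msupport (μ : Measure ℝ) : Set ℝ :=
  {x : ℝ | ∀ ε > 0, μ (Set.Ioo (x - ε) (x + ε)) ≠ 0}

namespace PTaux

set_option linter.unusedSectionVars false

variable (N : ℕ → ℕ) (q : (k : ℕ) → Fin (N k + 1) → ℝ)

/-- Partial sums of the `q`-column: `B k t = ∑_{i<t} q_{ik}`. -/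
noncomputable def B (k t : ℕ) : ℝ := ∑ i : Fin (N k + 1), if (i : ℕ) < t then q k i else 0

/-- Length of a rank-`n` cylinder. -/
noncomputable def Lc (n : ℕ) (ω : (k : ℕ) → Fin (N k + 1)) : ℝ :=
  ∏ s ∈ Finset.range n, q s (ω s)

/-- Left endpoint of a rank-`n` cylinder. -/
noncomputable def Ac (n : ℕ) (ω : (k : ℕ) → Fin (N k + 1)) : ℝ :=
  ∑ k ∈ Finset.range n, B N q k (ω k) * Lc N q k ω

lemma coding_eq (ω : (k : ℕ) → Fin (N k + 1)) :
    codingMap N q ω = ∑' k : ℕ, B N q k (ω k) * Lc N q k ω := rfl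

open scoped Classical in
/-- The greedy digit of `y` at level `k` : the largest `j` with `B k j ≤ y`. -/
noncomputable def dig (k : ℕ) (y : ℝ) : Fin (N k + 1) :=
  ⟨Nat.findGreatest (fun j => B N q k j ≤ y) (N k),
    Nat.lt_succ_of_le (Nat.findGreatest_le _)⟩

/-- The sequence of remainders of the greedy algorithm started at level `n'`. -/
noncomputable def grem (n' : ℕ) (ω : (k : ℕ) → Fin (N k + 1)) (y : ℝ) : ℕ → ℝ
  | 0 => (y - Ac N q n' ω) / Lc N q n' ω
  | (M + 1) =>
      (grem n' ω y M - B N q (n' + M) (dig N q (n' + M) (grem n' ω y M))) /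
        q (n' + M) (dig N q (n' + M) (grem n' ω y M))

/-- The set of points of the rank-`n'` cylinder of `ω` whose `M`-th greedy digit
(at level `n' + M`) is a `p`-forbidden digit. -/
noncomputable def Bad (p : (k : ℕ) → Fin (N k + 1) → ℝ) (M n' : ℕ)
    (ω : (k : ℕ) → Fin (N k + 1)) : Set ℝ :=
  {y | y ∈ Set.Icc (Ac N q n' ω) (Ac N q n' ω + Lc N q n' ω) ∧
    p (n' + M) (dig N q (n' + M) (grem N q n' ω y M)) = 0}

variable {N q}
variable (hq : ∀ k i, 0 < q k i) (hqs : ∀ k, ∑ i, q k i = 1)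
include hq hqs

lemma B_nonneg (k t : ℕ) : 0 ≤ B N q k t := by
  apply Finset.sum_nonneg; intro i _; split <;> [exact (hq k i).le; rfl]

lemma B_mono (k : ℕ) {t t' : ℕ} (h : t ≤ t') : B N q k t ≤ B N q k t' := by
  apply Finset.sum_le_sum; intro i _
  by_cases h1 : (i : ℕ) < t
  · rw [if_pos h1, if_pos (lt_of_lt_of_le h1 h)]
  · rw [if_neg h1]; split <;> [exact (hq k i).le; rfl]

lemma B_succ (k : ℕ) (j : Fin (N k + 1)) :
    B N q k ((j : ℕ) + 1) = B N q k j + q k j := by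
  unfold B
  have : ∀ i : Fin (N k + 1),
      (if (i : ℕ) < (j : ℕ) + 1 then q k i else 0)
        = (if (i : ℕ) < (j : ℕ) then q k i else 0) + (if i = j then q k i else 0) := by
    intro i
    rcases lt_trichotomy (i : ℕ) (j : ℕ) with h | h | h
    · rw [if_pos (by omega), if_pos h, if_neg (by intro he; subst he; omega)]; ring
    · rw [if_pos (by omega), if_neg (by omega), if_pos (by exact Fin.ext h)]
      rw [Fin.ext h]; ring
    · rw [if_neg (by omega), if_neg (by omega), if_neg (by intro he; subst he; omega)]; ring
  rw [Finset.sum_congr rfl (fun i _ => this i), Finset.sum_add_distrib,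
    Finset.sum_ite_eq' Finset.univ j (fun i => q k i), if_pos (Finset.mem_univ j)]

lemma B_top (k : ℕ) : B N q k (N k + 1) = 1 := by
  unfold B
  rw [Finset.sum_congr rfl (fun i _ => if_pos i.isLt)]
  exact hqs k

lemma B_add_q_le_one (k : ℕ) (j : Fin (N k + 1)) : B N q k j + q k j ≤ 1 := by
  rw [← B_succ hq hqs k j, ← B_top hq hqs k]
  exact B_mono hq hqs k (by omega)

lemma Lc_pos (n : ℕ) (ω : (k : ℕ) → Fin (N k + 1)) : 0 < Lc N q n ω :=
  Finset.prod_pos (fun s _ => hq s (ω s))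

lemma Lc_succ (n : ℕ) (ω : (k : ℕ) → Fin (N k + 1)) :
    Lc N q (n + 1) ω = Lc N q n ω * q n (ω n) := Finset.prod_range_succ _ _

lemma Ac_succ (n : ℕ) (ω : (k : ℕ) → Fin (N k + 1)) :
    Ac N q (n + 1) ω = Ac N q n ω + B N q n (ω n) * Lc N q n ω := Finset.sum_range_succ _ _

lemma Lc_congr {n : ℕ} {ω ω' : (k : ℕ) → Fin (N k + 1)} (h : ∀ k < n, ω' k = ω k) :
    Lc N q n ω' = Lc N q n ω :=
  Finset.prod_congr rfl (fun s hs => by rw [h s (Finset.mem_range.1 hs)])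

lemma Ac_congr {n : ℕ} {ω ω' : (k : ℕ) → Fin (N k + 1)} (h : ∀ k < n, ω' k = ω k) :
    Ac N q n ω' = Ac N q n ω := by
  apply Finset.sum_congr rfl
  intro k hk
  have hk' := Finset.mem_range.1 hk
  rw [h k hk', Lc_congr hq hqs (fun s hs => h s (hs.trans hk'))]

lemma term_le (k : ℕ) (ω : (k : ℕ) → Fin (N k + 1)) :
    B N q k (ω k) * Lc N q k ω ≤ Lc N q k ω - Lc N q (k + 1) ω := by
  rw [Lc_succ hq hqs]
  have h1 : B N q k (ω k) ≤ 1 - q k (ω k) := by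
    have := B_add_q_le_one hq hqs k (ω k); linarith
  nlinarith [Lc_pos hq hqs k ω, hq k (ω k)]

lemma term_nonneg (k : ℕ) (ω : (k : ℕ) → Fin (N k + 1)) :
    0 ≤ B N q k (ω k) * Lc N q k ω :=
  mul_nonneg (B_nonneg hq hqs k _) (Lc_pos hq hqs k ω).le

lemma summable_term (ω : (k : ℕ) → Fin (N k + 1)) :
    Summable (fun k => B N q k (ω k) * Lc N q k ω) := by
  apply summable_of_sum_range_le (c := 1) (fun k => term_nonneg hq hqs k ω)
  intro n
  calc ∑ k ∈ Finset.range n, B N q k (ω k) * Lc N q k ω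
      ≤ ∑ k ∈ Finset.range n, (Lc N q k ω - Lc N q (k + 1) ω) :=
        Finset.sum_le_sum (fun k _ => term_le hq hqs k ω)
    _ = Lc N q 0 ω - Lc N q n ω := Finset.sum_range_sub' _ _
    _ ≤ 1 := by
        have h0 : Lc N q 0 ω = 1 := by simp [Lc]
        have := Lc_pos hq hqs n ω; linarith

lemma coding_mem (m : ℕ) (ω : (k : ℕ) → Fin (N k + 1)) :
    codingMap N q ω ∈ Set.Icc (Ac N q m ω) (Ac N q m ω + Lc N q m ω) := by
  have hsum := summable_term hq hqs ω
  have hsplit := hsum.sum_add_tsum_nat_add m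
  rw [coding_eq, ← hsplit]
  have htail0 : 0 ≤ ∑' k : ℕ, B N q (k + m) (ω (k + m)) * Lc N q (k + m) ω :=
    tsum_nonneg (fun k => term_nonneg hq hqs _ ω)
  have htail1 : (∑' k : ℕ, B N q (k + m) (ω (k + m)) * Lc N q (k + m) ω) ≤ Lc N q m ω := by
    apply Summable.tsum_le_of_sum_range_le ((summable_nat_add_iff m).2 hsum)
    intro n
    calc ∑ k ∈ Finset.range n, B N q (k + m) (ω (k + m)) * Lc N q (k + m) ω
        ≤ ∑ k ∈ Finset.range n, (Lc N q (k + m) ω - Lc N q ((k + m) + 1) ω) :=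
          Finset.sum_le_sum (fun k _ => term_le hq hqs (k + m) ω)
      _ = ∑ k ∈ Finset.range n, (Lc N q (k + m) ω - Lc N q ((k + 1) + m) ω) := by
          apply Finset.sum_congr rfl; intro k _; ring_nf
      _ = Lc N q (0 + m) ω - Lc N q (n + m) ω := Finset.sum_range_sub' (fun k => Lc N q (k + m) ω) n
      _ ≤ Lc N q m ω := by
          have := Lc_pos hq hqs (n + m) ω
          simp only [Nat.zero_add]; linarith
  constructor
  · have : Ac N q m ω = ∑ k ∈ Finset.range m, B N q k (ω k) * Lc N q k ω := rfl
    rw [this]; linarith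
  · have : Ac N q m ω = ∑ k ∈ Finset.range m, B N q k (ω k) * Lc N q k ω := rfl
    rw [this]; linarith

lemma Icc_nested (ω : (k : ℕ) → Fin (N k + 1)) {n m : ℕ} (h : n ≤ m) :
    Set.Icc (Ac N q m ω) (Ac N q m ω + Lc N q m ω)
      ⊆ Set.Icc (Ac N q n ω) (Ac N q n ω + Lc N q n ω) := by
  induction m with
  | zero => simp_all
  | succ m ih =>
    rcases Nat.lt_or_ge n (m+1) with h1 | h1
    · refine subset_trans ?_ (ih (by omega))
      have hA : Ac N q m ω ≤ Ac N q (m+1) ω := by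
        rw [Ac_succ hq hqs]; nlinarith [term_nonneg hq hqs m ω]
      have hB : Ac N q (m+1) ω + Lc N q (m+1) ω ≤ Ac N q m ω + Lc N q m ω := by
        rw [Ac_succ hq hqs, Lc_succ hq hqs]
        nlinarith [B_add_q_le_one hq hqs m (ω m), Lc_pos hq hqs m ω]
      exact Set.Icc_subset_Icc hA hB
    · have : n = m + 1 := by omega
      subst this; rfl


lemma sep (ω ω' : (k : ℕ) → Fin (N k + 1)) (m : ℕ)
    (hx : codingMap N q ω' ∈ Set.Ioo (Ac N q m ω) (Ac N q m ω + Lc N q m ω)) :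
    ∀ k < m, ω' k = ω k := by
  induction m with
  | zero => omega
  | succ m ih =>
    have hA : Ac N q m ω ≤ Ac N q (m+1) ω := by
      rw [Ac_succ hq hqs]; nlinarith [term_nonneg hq hqs m ω]
    have hB : Ac N q (m+1) ω + Lc N q (m+1) ω ≤ Ac N q m ω + Lc N q m ω := by
      rw [Ac_succ hq hqs, Lc_succ hq hqs]
      nlinarith [B_add_q_le_one hq hqs m (ω m), Lc_pos hq hqs m ω]
    have hpre : ∀ k < m, ω' k = ω k := by
      apply ih
      exact ⟨lt_of_le_of_lt hA hx.1, lt_of_lt_of_le hx.2 hB⟩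
    have hAc : Ac N q m ω' = Ac N q m ω := Ac_congr hq hqs hpre
    have hLc : Lc N q m ω' = Lc N q m ω := Lc_congr hq hqs hpre
    have hmem := coding_mem hq hqs (m+1) ω'
    rw [Ac_succ hq hqs, Lc_succ hq hqs, hAc, hLc] at hmem
    rw [Ac_succ hq hqs, Lc_succ hq hqs] at hx
    have hLpos := Lc_pos hq hqs m ω
    have hd : ω' m = ω m := by
      by_contra hne
      rcases lt_or_gt_of_ne (fun h => hne (Fin.ext h)) with hlt | hlt
      · -- ω' m < ω m : x ≤ A_m + B(ω'm + 1) L ≤ A_m + B(ωm) L < x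
        have h1 : B N q m ((ω' m : ℕ) + 1) ≤ B N q m (ω m) :=
          B_mono hq hqs m (by omega)
        rw [B_succ hq hqs m (ω' m)] at h1
        have := hmem.2
        have := hx.1
        nlinarith
      · have h1 : B N q m ((ω m : ℕ) + 1) ≤ B N q m (ω' m) :=
          B_mono hq hqs m (by omega)
        rw [B_succ hq hqs m (ω m)] at h1
        have := hmem.1
        have := hx.2
        nlinarith
    intro k hk
    rcases Nat.lt_succ_iff_lt_or_eq.1 hk with h | h
    · exact hpre k h
    · subst h; exact hd

lemma Lc_le_sup (n : ℕ) (ω : (k : ℕ) → Fin (N k + 1)) :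
    Lc N q n ω ≤ ∏ s ∈ Finset.range n, ⨆ i, q s i := by
  apply Finset.prod_le_prod (fun s _ => (hq s (ω s)).le)
  intro s _
  exact le_ciSup (Set.Finite.bddAbove (Set.finite_range (q s))) (ω s)

lemma coding_continuous
    (hmax : Tendsto (fun n => ∏ k ∈ Finset.range n, ⨆ i, q k i) atTop (nhds 0)) :
    Continuous (codingMap N q) := by
  have key : ∀ (k : ℕ) (g : Fin (N k + 1) → ℝ),
      Continuous (fun ω : (k : ℕ) → Fin (N k + 1) => g (ω k)) := fun k g =>
    Continuous.comp (continuous_of_discreteTopology) (continuous_apply k)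
  have hcontA : ∀ m, Continuous (fun ω => Ac N q m ω) := by
    intro m
    apply continuous_finset_sum
    intro k _
    exact Continuous.mul (key k (fun d => B N q k d)) (continuous_finset_prod _ (fun s _ => key s (q s)))
  apply TendstoUniformly.continuous (F := fun m ω => Ac N q m ω) (p := atTop)
  · rw [Metric.tendstoUniformly_iff]
    intro ε hε
    filter_upwards [hmax.eventually_lt_const hε] with m hm ω
    have hmem := coding_mem hq hqs m ω
    have hsup := Lc_le_sup hq hqs m ω
    rw [Real.dist_eq]
    rw [abs_lt]
    constructor <;> nlinarith [hmem.1, hmem.2, Lc_pos hq hqs m ω]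
  · exact (Eventually.of_forall hcontA).frequently

open scoped Classical in
lemma dig_le {k : ℕ} {y : ℝ} (h0 : 0 ≤ y) : B N q k (dig N q k y) ≤ y := by
  have h0' : B N q k 0 ≤ y := by simpa [B] using h0
  exact Nat.findGreatest_spec (P := fun j => B N q k j ≤ y) (Nat.zero_le (N k)) h0' 

open scoped Classical in
lemma dig_ge {k : ℕ} {y : ℝ} (h1 : y ≤ 1) :
    y ≤ B N q k (dig N q k y) + q k (dig N q k y) := by
  rw [← B_succ hq hqs k (dig N q k y)]
  have hdv : (dig N q k y : ℕ) = Nat.findGreatest (fun j => B N q k j ≤ y) (N k) := rfl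
  rcases Nat.lt_or_ge ((dig N q k y : ℕ)) (N k) with hlt | hge
  · by_contra hcon
    push_neg at hcon
    exact Nat.findGreatest_is_greatest (P := fun j => B N q k j ≤ y) (n := N k)
      (by omega) (by omega) hcon.le
  · have hEq : (dig N q k y : ℕ) = N k := le_antisymm (Nat.findGreatest_le _) hge
    rw [hEq, B_top hq hqs k]
    exact h1

lemma grem_shift (n' : ℕ) (ω : (k : ℕ) → Fin (N k + 1)) (y : ℝ)
    (d : Fin (N n' + 1)) (hd : d = dig N q n' (grem N q n' ω y 0)) (M : ℕ) :
    grem N q (n' + 1) (Function.update ω n' d) y M = grem N q n' ω y (M + 1) := by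
  induction M with
  | zero =>
    set ω' := Function.update ω n' d with hω'
    have hpre : ∀ k < n', ω' k = ω k := fun k hk =>
      Function.update_of_ne (by omega) _ _
    have hA : Ac N q (n' + 1) ω' = Ac N q n' ω + B N q n' d * Lc N q n' ω := by
      rw [Ac_succ hq hqs, Ac_congr hq hqs hpre, Lc_congr hq hqs hpre]
      simp [hω', Function.update_self]
    have hL : Lc N q (n' + 1) ω' = Lc N q n' ω * q n' d := by
      rw [Lc_succ hq hqs, Lc_congr hq hqs hpre]
      simp [hω', Function.update_self]
    show (y - Ac N q (n' + 1) ω') / Lc N q (n' + 1) ω' = _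
    rw [hA, hL]
    show _ = (grem N q n' ω y 0 - B N q n' (dig N q n' (grem N q n' ω y 0))) /
        q n' (dig N q n' (grem N q n' ω y 0))
    rw [← hd]
    show _ = ((y - Ac N q n' ω) / Lc N q n' ω - B N q n' d) / q n' d
    have h1 := (Lc_pos hq hqs n' ω).ne'
    have h2 := (hq n' d).ne'
    field_simp
    ring
  | succ M ih =>
    show (grem N q (n' + 1) (Function.update ω n' d) y M - _) / _ = _
    rw [ih]
    have hidx : n' + 1 + M = n' + (M + 1) := by omega
    rw [hidx]
    rfl

lemma Bad_vol (p : (k : ℕ) → Fin (N k + 1) → ℝ) (M : ℕ) :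
    ∀ (n' : ℕ) (ω : (k : ℕ) → Fin (N k + 1)),
    volume (Bad N q p M n' ω) ≤
      ENNReal.ofReal (Lc N q n' ω * ∑ i, if p (n' + M) i = 0 then q (n' + M) i else 0) := by
  induction M with
  | zero =>
    intro n' ω
    classical
    have hsub : Bad N q p 0 n' ω ⊆
        ⋃ i : Fin (N n' + 1), (if p n' i = 0 then
          Set.Icc (Ac N q n' ω + B N q n' i * Lc N q n' ω)
            (Ac N q n' ω + B N q n' i * Lc N q n' ω + q n' i * Lc N q n' ω) else ∅) := by
      rintro y ⟨hy, hp0⟩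
      have hL := Lc_pos hq hqs n' ω
      set u := grem N q n' ω y 0 with hu
      have hu0 : 0 ≤ u := by
        rw [hu]; show 0 ≤ (y - Ac N q n' ω) / Lc N q n' ω
        apply div_nonneg (by linarith [hy.1]) hL.le
      have hu1 : u ≤ 1 := by
        rw [hu]; show (y - Ac N q n' ω) / Lc N q n' ω ≤ 1
        rw [div_le_one hL]; linarith [hy.2]
      have hyu : y = Ac N q n' ω + Lc N q n' ω * u := by
        rw [hu]; show y = _ + _ * ((y - Ac N q n' ω) / Lc N q n' ω)
        field_simp; ring
      set d := dig N q n' u with hdd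
      refine Set.mem_iUnion.2 ⟨d, ?_⟩
      have hp0' : p n' d = 0 := by simpa using hp0
      rw [if_pos hp0']
      have h1 : B N q n' d ≤ u := dig_le hq hqs hu0
      have h2 : u ≤ B N q n' d + q n' d := dig_ge hq hqs hu1
      constructor
      · rw [hyu]; nlinarith
      · rw [hyu]; nlinarith
    calc volume (Bad N q p 0 n' ω) ≤ _ := measure_mono hsub
      _ ≤ ∑' i : Fin (N n' + 1), volume (if p n' i = 0 then
          Set.Icc (Ac N q n' ω + B N q n' i * Lc N q n' ω)
            (Ac N q n' ω + B N q n' i * Lc N q n' ω + q n' i * Lc N q n' ω) else ∅) :=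
        measure_iUnion_le _
      _ = ∑ i : Fin (N n' + 1), volume (if p n' i = 0 then
          Set.Icc (Ac N q n' ω + B N q n' i * Lc N q n' ω)
            (Ac N q n' ω + B N q n' i * Lc N q n' ω + q n' i * Lc N q n' ω) else ∅) :=
        tsum_fintype _
      _ = ∑ i : Fin (N n' + 1), ENNReal.ofReal (if p n' i = 0 then q n' i * Lc N q n' ω else 0) := by
        apply Finset.sum_congr rfl
        intro i _
        by_cases hpi : p n' i = 0
        · rw [if_pos hpi, if_pos hpi, Real.volume_Icc]
          ring_nf
        · rw [if_neg hpi, if_neg hpi]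
          simp
      _ = ENNReal.ofReal (∑ i : Fin (N n' + 1), if p n' i = 0 then q n' i * Lc N q n' ω else 0) := by
        rw [ENNReal.ofReal_sum_of_nonneg]
        intro i _
        split
        · exact mul_nonneg (hq n' i).le (Lc_pos hq hqs n' ω).le
        · rfl
      _ = ENNReal.ofReal (Lc N q n' ω * ∑ i, if p (n' + 0) i = 0 then q (n' + 0) i else 0) := by
        congr 1
        rw [Finset.mul_sum]
        apply Finset.sum_congr rfl
        intro i _
        show _ = Lc N q n' ω * (if p n' i = 0 then q n' i else 0)
        split <;> ring
  | succ M ih =>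
    intro n' ω
    classical
    have hsub : Bad N q p (M + 1) n' ω ⊆
        ⋃ d : Fin (N n' + 1), Bad N q p M (n' + 1) (Function.update ω n' d) := by
      rintro y ⟨hy, hp0⟩
      have hL := Lc_pos hq hqs n' ω
      set u := grem N q n' ω y 0 with hu
      have hu0 : 0 ≤ u := by
        rw [hu]; show 0 ≤ (y - Ac N q n' ω) / Lc N q n' ω
        apply div_nonneg (by linarith [hy.1]) hL.le
      have hu1 : u ≤ 1 := by
        rw [hu]; show (y - Ac N q n' ω) / Lc N q n' ω ≤ 1
        rw [div_le_one hL]; linarith [hy.2]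
      have hyu : y = Ac N q n' ω + Lc N q n' ω * u := by
        rw [hu]; show y = _ + _ * ((y - Ac N q n' ω) / Lc N q n' ω)
        field_simp; ring
      set d := dig N q n' u with hdd
      refine Set.mem_iUnion.2 ⟨d, ?_⟩
      set ω' := Function.update ω n' d with hω'
      have hpre : ∀ k < n', ω' k = ω k := fun k hk =>
        Function.update_of_ne (by omega) _ _
      have hA : Ac N q (n' + 1) ω' = Ac N q n' ω + B N q n' d * Lc N q n' ω := by
        rw [Ac_succ hq hqs, Ac_congr hq hqs hpre, Lc_congr hq hqs hpre]
        simp [hω', Function.update_self]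
      have hLs : Lc N q (n' + 1) ω' = Lc N q n' ω * q n' d := by
        rw [Lc_succ hq hqs, Lc_congr hq hqs hpre]
        simp [hω', Function.update_self]
      have h1 : B N q n' d ≤ u := dig_le hq hqs hu0
      have h2 : u ≤ B N q n' d + q n' d := dig_ge hq hqs hu1
      constructor
      · rw [hA, hLs]
        constructor
        · rw [hyu]; nlinarith
        · rw [hyu]; nlinarith
      · rw [grem_shift hq hqs n' ω y d hdd M]
        have hidx : n' + 1 + M = n' + (M + 1) := by omega
        rw [hidx]
        exact hp0
    calc volume (Bad N q p (M + 1) n' ω)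
        ≤ volume (⋃ d : Fin (N n' + 1), Bad N q p M (n' + 1) (Function.update ω n' d)) :=
          measure_mono hsub
      _ ≤ ∑' d : Fin (N n' + 1), volume (Bad N q p M (n' + 1) (Function.update ω n' d)) :=
          measure_iUnion_le _
      _ = ∑ d : Fin (N n' + 1), volume (Bad N q p M (n' + 1) (Function.update ω n' d)) :=
          tsum_fintype _
      _ ≤ ∑ d : Fin (N n' + 1), ENNReal.ofReal (Lc N q (n' + 1) (Function.update ω n' d) *
            ∑ i, if p (n' + 1 + M) i = 0 then q (n' + 1 + M) i else 0) :=
          Finset.sum_le_sum (fun d _ => ih (n' + 1) (Function.update ω n' d))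
      _ = ENNReal.ofReal (Lc N q n' ω * ∑ i, if p (n' + (M + 1)) i = 0 then q (n' + (M + 1)) i else 0) := by
          have hidx : n' + 1 + M = n' + (M + 1) := by omega
          rw [hidx]
          have hz0 : 0 ≤ ∑ i, if p (n' + (M + 1)) i = 0 then q (n' + (M + 1)) i else 0 := by
            apply Finset.sum_nonneg; intro i _; split
            · exact (hq _ i).le
            · rfl
          have hLs : ∀ d : Fin (N n' + 1), Lc N q (n' + 1) (Function.update ω n' d)
              = Lc N q n' ω * q n' d := by
            intro d
            have hpre : ∀ k < n', (Function.update ω n' d) k = ω k := fun k hk =>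
              Function.update_of_ne (by omega) _ _
            rw [Lc_succ hq hqs, Lc_congr hq hqs hpre]
            simp [Function.update_self]
          calc ∑ d : Fin (N n' + 1), ENNReal.ofReal (Lc N q (n' + 1) (Function.update ω n' d) *
                ∑ i, if p (n' + (M + 1)) i = 0 then q (n' + (M + 1)) i else 0)
              = ENNReal.ofReal (∑ d : Fin (N n' + 1), Lc N q (n' + 1) (Function.update ω n' d) *
                ∑ i, if p (n' + (M + 1)) i = 0 then q (n' + (M + 1)) i else 0) := by
                rw [ENNReal.ofReal_sum_of_nonneg]
                intro d _
                exact mul_nonneg (Lc_pos hq hqs _ _).le hz0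
            _ = _ := by
                congr 1
                rw [Finset.sum_congr rfl (fun d _ => by rw [hLs d]), ← Finset.sum_mul,
                  ← Finset.mul_sum, hqs n']
                ring

lemma cover (p : (k : ℕ) → Fin (N k + 1) → ℝ)
    (hmax : Tendsto (fun n => ∏ k ∈ Finset.range n, ⨆ i, q k i) atTop (nhds 0))
    (n : ℕ) (ω : (k : ℕ) → Fin (N k + 1)) :
    Set.Icc (Ac N q n ω) (Ac N q n ω + Lc N q n ω) ⊆
      (codingMap N q '' {ω' | (∀ k < n, ω' k = ω k) ∧ ∀ k, n ≤ k → p k (ω' k) ≠ 0})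
      ∪ ⋃ M : ℕ, Bad N q p M n ω := by
  intro y hy
  by_cases hbad : y ∈ ⋃ M : ℕ, Bad N q p M n ω
  · exact Or.inr hbad
  · left
    have hnb : ∀ M : ℕ, y ∉ Bad N q p M n ω := by
      intro M hM; exact hbad (Set.mem_iUnion.2 ⟨M, hM⟩)
    classical
    set ω' : (k : ℕ) → Fin (N k + 1) :=
      fun k => if h : k < n then ω k else dig N q k (grem N q n ω y (k - n)) with hω'
    have hpre : ∀ k < n, ω' k = ω k := by
      intro k hk; simp only [hω']; rw [dif_pos hk]
    have hLpos := Lc_pos hq hqs n ω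
    have hAeq : Ac N q n ω' = Ac N q n ω := Ac_congr hq hqs hpre
    have hLeq : Lc N q n ω' = Lc N q n ω := Lc_congr hq hqs hpre
    have hωd : ∀ M : ℕ, ω' (n + M) = dig N q (n + M) (grem N q n ω y M) := by
      intro M
      simp only [hω']
      rw [dif_neg (by omega), Nat.add_sub_cancel_left]
    have hINV : ∀ M : ℕ, (0 ≤ grem N q n ω y M ∧ grem N q n ω y M ≤ 1) ∧
        y = Ac N q (n + M) ω' + Lc N q (n + M) ω' * grem N q n ω y M := by
      intro M
      induction M with
      | zero =>
        have hg0 : grem N q n ω y 0 = (y - Ac N q n ω) / Lc N q n ω := rfl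
        refine ⟨⟨?_, ?_⟩, ?_⟩
        · rw [hg0]; exact div_nonneg (by linarith [hy.1]) hLpos.le
        · rw [hg0, div_le_one hLpos]; linarith [hy.2]
        · show y = Ac N q n ω' + Lc N q n ω' * grem N q n ω y 0
          rw [hAeq, hLeq, hg0]; field_simp; ring
      | succ M ih =>
        obtain ⟨⟨h0, h1⟩, hid⟩ := ih
        set r := grem N q n ω y M with hr
        set d := dig N q (n + M) r with hd
        have hb1 : B N q (n + M) d ≤ r := dig_le hq hqs h0
        have hb2 : r ≤ B N q (n + M) d + q (n + M) d := dig_ge hq hqs h1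
        have hqd := hq (n + M) d
        have hgs : grem N q n ω y (M + 1) = (r - B N q (n + M) d) / q (n + M) d := rfl
        have hLpos' := Lc_pos hq hqs (n + M) ω'
        refine ⟨⟨?_, ?_⟩, ?_⟩
        · rw [hgs]; exact div_nonneg (by linarith) hqd.le
        · rw [hgs, div_le_one hqd]; linarith
        · have hrd : r = B N q (n + M) d + q (n + M) d * grem N q n ω y (M + 1) := by
            rw [hgs]; field_simp; ring
          have hidx : n + (M + 1) = (n + M) + 1 := by omega
          rw [hidx, Ac_succ hq hqs, Lc_succ hq hqs, hωd M, ← hd]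
          rw [hrd] at hid
          linear_combination hid
    have hyIcc : ∀ M : ℕ, y ∈ Set.Icc (Ac N q (n + M) ω') (Ac N q (n + M) ω' + Lc N q (n + M) ω') := by
      intro M
      obtain ⟨⟨h0, h1⟩, hid⟩ := hINV M
      have hLpos' := Lc_pos hq hqs (n + M) ω'
      constructor
      · rw [hid]; nlinarith
      · rw [hid]; nlinarith
    have hcy : codingMap N q ω' = y := by
      have hle : ∀ M : ℕ, |codingMap N q ω' - y| ≤ ∏ s ∈ Finset.range (n + M), ⨆ i, q s i := by
        intro M
        have h1 := coding_mem hq hqs (n + M) ω'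
        have h2 := hyIcc M
        have h3 := Lc_le_sup hq hqs (n + M) ω'
        rw [abs_le]
        constructor <;> [linarith [h1.1, h2.2]; linarith [h1.2, h2.1]]
      have hC : Tendsto (fun M => ∏ s ∈ Finset.range (n + M), ⨆ i, q s i) atTop (nhds 0) :=
        (hmax.comp (tendsto_add_atTop_nat n)).congr (fun M => by
          simp [Function.comp, Nat.add_comm])
      have habs : |codingMap N q ω' - y| ≤ 0 :=
        ge_of_tendsto hC (Eventually.of_forall hle)
      exact sub_eq_zero.1 (abs_nonpos_iff.1 habs)
    refine ⟨ω', ⟨hpre, ?_⟩, hcy⟩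
    intro k hk
    have hnb' := hnb (k - n)
    simp only [Bad, Set.mem_setOf_eq] at hnb'
    have hkk : n + (k - n) = k := by omega
    intro hp0
    apply hnb'
    refine ⟨hy, ?_⟩
    rw [hkk]
    have : ω' k = dig N q k (grem N q n ω y (k - n)) := by
      simp only [hω']; rw [dif_neg (by omega)]
    rw [← this]
    exact hp0


end PTaux

open scoped Classical in
/-- Theorem 3, case 3): if the matrix `P̃` has infinitely many columns with a zero
entry, and `∑_k ∑_{i : p_{ik} = 0} q_{ik} < ∞`, then the topological support of
`μ_ξ` is nowhere dense, yet `μ_ξ` is supported by a set `P` every neighbourhood of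
each of whose points meets `P` in positive Lebesgue measure, i.e. `μ_ξ` is of pure
P-type. -/
theorem support_P_type (N : ℕ → ℕ) (p q : (k : ℕ) → Fin (N k + 1) → ℝ)
    (μ : Measure ((k : ℕ) → Fin (N k + 1))) [IsProbabilityMeasure μ]
    (hp : ∀ k i, 0 ≤ p k i) (hq : ∀ k i, 0 < q k i)
    (hps : ∀ k, ∑ i, p k i = 1) (hqs : ∀ k, ∑ i, q k i = 1)
    (hmax : Tendsto (fun n => ∏ k ∈ Finset.range n, ⨆ i, q k i) atTop (nhds 0))
    (hμ : ∀ (n : ℕ) (ω : (k : ℕ) → Fin (N k + 1)),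
      μ {x | ∀ k < n, x k = ω k} = ENNReal.ofReal (∏ k ∈ Finset.range n, p k (ω k)))
    (μξ : Measure ℝ) (hμξ : μξ = Measure.map (codingMap N q) μ)
    (hinf : {k | ∃ i, p k i = 0}.Infinite)
    (hconv : Summable (fun k => ∑ i, if p k i = 0 then q k i else 0)) :
    IsNowhereDense (msupport μξ) ∧
    ∃ P : Set ℝ, μξ P = 1 ∧
      ∀ x ∈ P, ∀ ε > 0, 0 < volume (P ∩ Set.Ioo (x - ε) (x + ε)) := by
  classical
  have hcont : Continuous (codingMap N q) := PTaux.coding_continuous hq hqs hmax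
  have hmeas : Measurable (codingMap N q) := hcont.measurable
  set G : Set ((k : ℕ) → Fin (N k + 1)) := {ω | ∀ k, p k (ω k) ≠ 0} with hG
  set P : Set ℝ := codingMap N q '' G with hPdef
  -- P is compact, hence closed and measurable
  have hGclosed : IsClosed G := by
    have : G = ⋂ k : ℕ, (fun ω : (k : ℕ) → Fin (N k + 1) => ω k) ⁻¹' {i | p k i ≠ 0} := by
      ext ω; simp [hG, Set.mem_iInter]
    rw [this]
    exact isClosed_iInter (fun k => (isClosed_discrete _).preimage (continuous_apply k))
  have hPcompact : IsCompact P := (hGclosed.isCompact).image hcont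
  have hPclosed : IsClosed P := hPcompact.isClosed
  have hPmeas : MeasurableSet P := hPclosed.measurableSet
  -- coordinates with forbidden digits are null
  have hnullcoord : ∀ (k : ℕ) (i : Fin (N k + 1)), p k i = 0 →
      μ {x : (k : ℕ) → Fin (N k + 1) | x k = i} = 0 := by
    intro k i hpk
    set ext : ((j : Fin (k + 1)) → Fin (N (j : ℕ) + 1)) → ((j : ℕ) → Fin (N j + 1)) :=
      fun c j => if h : j < k + 1 then c ⟨j, h⟩ else ⟨0, Nat.succ_pos _⟩ with hext
    set U : ((j : Fin (k + 1)) → Fin (N (j : ℕ) + 1)) → Set ((j : ℕ) → Fin (N j + 1)) :=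
      fun c => if c ⟨k, Nat.lt_succ_self k⟩ = i then {x | ∀ j < k + 1, x j = ext c j} else ∅
      with hU
    have hcover : {x : (k : ℕ) → Fin (N k + 1) | x k = i} ⊆ ⋃ c, U c := by
      intro x hx
      refine Set.mem_iUnion.2 ⟨fun j => x (j : ℕ), ?_⟩
      have hx' : x k = i := hx
      rw [hU]
      simp only
      rw [if_pos hx']
      intro j hj
      show x j = (if h : j < k + 1 then x j else ⟨0, Nat.succ_pos _⟩)
      rw [dif_pos hj]
    have hzero : ∀ c, μ (U c) = 0 := by
      intro c
      rw [hU]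
      simp only
      split
      · rename_i hc
        rw [hμ (k + 1) (ext c)]
        have : p k (ext c k) = 0 := by
          have : ext c k = i := by rw [hext]; simp only; rw [dif_pos (Nat.lt_succ_self k)]; exact hc
          rw [this, hpk]
        rw [Finset.prod_eq_zero (Finset.mem_range.2 (Nat.lt_succ_self k)) this]
        simp
      · exact measure_empty
    refine le_antisymm ?_ zero_le
    calc μ {x : (k : ℕ) → Fin (N k + 1) | x k = i} ≤ μ (⋃ c, U c) := measure_mono hcover
      _ ≤ ∑' c, μ (U c) := measure_iUnion_le _
      _ = 0 := by simp [hzero]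
  -- the good set has full measure
  have hGfull : μ Gᶜ = 0 := by
    have hsub : Gᶜ ⊆ ⋃ k : ℕ, {x : (k : ℕ) → Fin (N k + 1) | p k (x k) = 0} := by
      intro x hx
      simp only [hG, Set.mem_compl_iff, Set.mem_setOf_eq, not_forall, not_not] at hx
      obtain ⟨k, hk⟩ := hx
      exact Set.mem_iUnion.2 ⟨k, hk⟩
    apply measure_mono_null hsub
    apply measure_iUnion_null
    intro k
    have hsub2 : {x : (k : ℕ) → Fin (N k + 1) | p k (x k) = 0} ⊆
        ⋃ i : Fin (N k + 1), (if p k i = 0 then {x : (k : ℕ) → Fin (N k + 1) | x k = i} else ∅) := by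
      intro x hx
      have hx' : p k (x k) = 0 := hx
      refine Set.mem_iUnion.2 ⟨x k, ?_⟩
      rw [if_pos hx']
      rfl
    apply measure_mono_null hsub2
    apply measure_iUnion_null
    intro i
    split
    · exact hnullcoord k i ‹_›
    · exact measure_empty
  -- μξ is a probability measure and μξ P = 1
  haveI : IsProbabilityMeasure μξ := by
    rw [hμξ]; exact Measure.isProbabilityMeasure_map hmeas.aemeasurable
  have hP1 : μξ P = 1 := by
    rw [hμξ, Measure.map_apply hmeas hPmeas]
    refine le_antisymm prob_le_one ?_
    have hsub : G ⊆ codingMap N q ⁻¹' P := fun ω hω => ⟨ω, hω, rfl⟩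
    calc (1 : ENNReal) = μ Set.univ := measure_univ.symm
      _ ≤ μ ((codingMap N q ⁻¹' P) ∪ Gᶜ) := measure_mono (fun ω _ => by
          by_cases h : ω ∈ G
          · exact Or.inl (hsub h)
          · exact Or.inr h)
      _ ≤ μ (codingMap N q ⁻¹' P) + μ Gᶜ := measure_union_le _ _
      _ = μ (codingMap N q ⁻¹' P) := by rw [hGfull, add_zero]
  -- the support is contained in P
  have hsupP : msupport μξ ⊆ P := by
    intro x hx
    by_contra hxP
    obtain ⟨ε, hε, hball⟩ := Metric.isOpen_iff.1 hPclosed.isOpen_compl x hxP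
    have hIoo : Set.Ioo (x - ε) (x + ε) ⊆ Pᶜ := by
      rw [← Real.ball_eq_Ioo]; exact hball
    have hc : μξ Pᶜ = 0 := by
      rw [measure_compl hPmeas (measure_ne_top _ _), hP1, measure_univ, tsub_self]
    exact hx ε hε (measure_mono_null hIoo hc)
  -- the support is closed
  have hclosed : IsClosed (msupport μξ) := by
    rw [← isOpen_compl_iff]
    rw [Metric.isOpen_iff]
    intro x hx
    simp only [msupport, Set.mem_compl_iff, Set.mem_setOf_eq, not_forall, not_not] at hx
    obtain ⟨ε, hε, hx0⟩ := hx
    refine ⟨ε / 2, by linarith, ?_⟩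
    intro y hy
    rw [Metric.mem_ball, Real.dist_eq] at hy
    simp only [msupport, Set.mem_compl_iff, Set.mem_setOf_eq, not_forall, not_not]
    refine ⟨ε / 2, by linarith, ?_⟩
    apply measure_mono_null (Set.Ioo_subset_Ioo (by cases abs_lt.1 hy; linarith)
      (by cases abs_lt.1 hy; linarith)) hx0
  -- P has empty interior
  have hPint : interior P = ∅ := by
    rw [Set.eq_empty_iff_forall_notMem]
    intro x hx
    obtain ⟨ε, hε, hball⟩ := Metric.mem_nhds_iff.1 (mem_interior_iff_mem_nhds.1 hx)
    obtain ⟨ω, hωG, hωx⟩ := interior_subset hx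
    obtain ⟨n₀, hn₀⟩ := (hmax.eventually_lt_const hε).exists
    obtain ⟨m, hm, hmgt⟩ := hinf.exists_gt n₀
    obtain ⟨i, hpi⟩ := hm
    set ω' := Function.update ω m i with hω'
    have hpre : ∀ k < n₀, ω' k = ω k := fun k hk =>
      Function.update_of_ne (by omega) _ _
    have hLpos := PTaux.Lc_pos hq hqs (m + 1) ω'
    obtain ⟨y, hy⟩ : ∃ y, y = PTaux.Ac N q (m + 1) ω' + PTaux.Lc N q (m + 1) ω' / 2 :=
      ⟨_, rfl⟩
    have hyJ : y ∈ Set.Ioo (PTaux.Ac N q (m + 1) ω')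
        (PTaux.Ac N q (m + 1) ω' + PTaux.Lc N q (m + 1) ω') := by
      rw [hy]; constructor <;> linarith
    -- y is within ε of x
    have hyIcc : y ∈ Set.Icc (PTaux.Ac N q n₀ ω) (PTaux.Ac N q n₀ ω + PTaux.Lc N q n₀ ω) := by
      have h1 := PTaux.Icc_nested hq hqs ω' (le_of_lt (by omega : n₀ < m + 1))
      have h2 := h1 (Set.mem_Icc.2 ⟨hyJ.1.le, hyJ.2.le⟩)
      rwa [PTaux.Ac_congr hq hqs hpre, PTaux.Lc_congr hq hqs hpre] at h2
    have hxIcc : x ∈ Set.Icc (PTaux.Ac N q n₀ ω) (PTaux.Ac N q n₀ ω + PTaux.Lc N q n₀ ω) := by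
      rw [← hωx]; exact PTaux.coding_mem hq hqs n₀ ω
    have hyP : y ∈ P := by
      apply hball
      rw [Metric.mem_ball, Real.dist_eq, abs_lt]
      have hLsup := PTaux.Lc_le_sup hq hqs n₀ ω
      constructor <;>
        linarith [hyIcc.1, hyIcc.2, hxIcc.1, hxIcc.2, hLsup, hn₀]
    obtain ⟨ω'', hω''G, hω''y⟩ := hyP
    have hsep := PTaux.sep hq hqs ω' ω'' (m + 1) (by rw [hω''y]; exact hyJ)
    have : ω'' m = i := by
      rw [hsep m (Nat.lt_succ_self m), hω']; exact Function.update_self _ _ _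
    exact hω''G m (this ▸ hpi)
  constructor
  · -- nowhere dense
    show interior (closure (msupport μξ)) = ∅
    rw [hclosed.closure_eq]
    have := interior_mono hsupP
    rw [hPint] at this
    exact Set.eq_empty_iff_forall_notMem.2 (fun x hx => (this hx).elim)
  · -- P-type
    refine ⟨P, hP1, ?_⟩
    intro x hxP ε hε
    obtain ⟨ω, hωG, hωx⟩ := hxP
    set z : ℕ → ℝ := fun k => ∑ i, if p k i = 0 then q k i else 0 with hz
    have hz0 : ∀ k, 0 ≤ z k := by
      intro k
      apply Finset.sum_nonneg
      intro i _
      split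
      · exact (hq k i).le
      · rfl
    have htail : Tendsto (fun n => ∑' k, z (k + n)) atTop (nhds 0) := tendsto_sum_nat_add z
    obtain ⟨n, hn1, hn2⟩ := ((hmax.eventually_lt_const hε).and
      (htail.eventually_lt_const (by norm_num : (0:ℝ) < 1/2))).exists
    set K : Set ℝ := codingMap N q ''
      {ω' | (∀ k < n, ω' k = ω k) ∧ ∀ k, n ≤ k → p k (ω' k) ≠ 0} with hK
    have hKP : K ⊆ P := by
      rintro y ⟨ω', ⟨hpre, hgood⟩, hy⟩
      refine ⟨ω', fun k => ?_, hy⟩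
      rcases Nat.lt_or_ge k n with h | h
      · rw [hpre k h]; exact hωG k
      · exact hgood k h
    have hxIcc : x ∈ Set.Icc (PTaux.Ac N q n ω) (PTaux.Ac N q n ω + PTaux.Lc N q n ω) := by
      rw [← hωx]; exact PTaux.coding_mem hq hqs n ω
    have hKIoo : K ⊆ Set.Ioo (x - ε) (x + ε) := by
      rintro y ⟨ω', ⟨hpre, _⟩, hy⟩
      have h1 := PTaux.coding_mem hq hqs n ω'
      rw [hy, PTaux.Ac_congr hq hqs hpre, PTaux.Lc_congr hq hqs hpre] at h1
      have hLsup := PTaux.Lc_le_sup hq hqs n ω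
      constructor <;>
        linarith [h1.1, h1.2, hxIcc.1, hxIcc.2, hLsup, hn1]
    have hcover := PTaux.cover hq hqs p hmax n ω
    -- volume estimate
    have hLpos := PTaux.Lc_pos hq hqs n ω
    set L := PTaux.Lc N q n ω with hL
    have hzsum : Summable (fun M => z (n + M)) :=
      (((summable_nat_add_iff n).2 hconv).congr (fun M => by rw [Nat.add_comm]))
    set t := ∑' M, z (n + M) with ht
    have htlt : t < 1/2 := by
      rw [ht]
      have : (∑' M, z (n + M)) = ∑' k, z (k + n) := tsum_congr (fun M => by rw [Nat.add_comm])
      rw [this]; exact hn2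
    have ht0 : 0 ≤ t := tsum_nonneg (fun M => hz0 _)
    rw [pos_iff_ne_zero]
    intro hvol0
    have hKvol : volume K = 0 := by
      refine le_antisymm ?_ zero_le
      rw [← hvol0]
      exact measure_mono (fun y hy => ⟨hKP hy, hKIoo hy⟩)
    have hmain : ENNReal.ofReal L ≤ ENNReal.ofReal (L * t) := by
      calc ENNReal.ofReal L
          = volume (Set.Icc (PTaux.Ac N q n ω) (PTaux.Ac N q n ω + PTaux.Lc N q n ω)) := by
            rw [Real.volume_Icc]; congr 1; rw [hL]; ring
        _ ≤ volume (K ∪ ⋃ M : ℕ, PTaux.Bad N q p M n ω) := measure_mono hcover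
        _ ≤ volume K + volume (⋃ M : ℕ, PTaux.Bad N q p M n ω) := measure_union_le _ _
        _ = volume (⋃ M : ℕ, PTaux.Bad N q p M n ω) := by rw [hKvol, zero_add]
        _ ≤ ∑' M : ℕ, volume (PTaux.Bad N q p M n ω) := measure_iUnion_le _
        _ ≤ ∑' M : ℕ, ENNReal.ofReal (L * z (n + M)) :=
            ENNReal.tsum_le_tsum (fun M => PTaux.Bad_vol hq hqs p M n ω)
        _ = ENNReal.ofReal (∑' M : ℕ, L * z (n + M)) := by
            rw [ENNReal.ofReal_tsum_of_nonneg (fun M => mul_nonneg hLpos.le (hz0 _))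
              (hzsum.mul_left L)]
        _ = ENNReal.ofReal (L * t) := by rw [tsum_mul_left]
    rw [ENNReal.ofReal_le_ofReal_iff (mul_nonneg hLpos.le ht0)] at hmain
    nlinarith
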